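/- There exist A₀ > 0 and C ≥ 1 such that the following holds: for every A ∈ (0, A₀] and every C² function Θ : [0,∞) → ℝ which is positive on [0,∞) and solves Θ''(r) + (5/r)Θ'(r) + (r/2)Θ'(r) + Θ(r) + Θ(r)² = 0 for r > 0 with Θ(0) = A and Θ'(0) = 0, one has C⁻¹ A (1+r)⁻² ≤ Θ(r) ≤ C A (1+r)⁻² for all r ≥ 0. Consequently, setting θ_A(x,t) = (t+1)⁻¹ Θ(|x|/√(t+1)) for x ∈ ℝ⁶ and t > 0, there exists C' ≥ 1 such that C'⁻¹ A [t⁻¹ 𝟙_{|x| ≤ √t} + |x|⁻² 𝟙_{|x| > √t}] ≤ θ_A(x,t) ≤ C' A [t⁻¹ 𝟙_{|x| ≤ √t} + |x|⁻² 𝟙_{|x| > √t}] for all x ∈ ℝ⁶ and t > 1. -/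

import Mathlib

noncomputable section

open Set Real


private lemma upos (r : ℝ) : (0:ℝ) < 4 + r^2 := by positivity

private lemma hasDerivAt_W (r : ℝ) :
    HasDerivAt (fun s : ℝ => s^5 * Real.exp (s^2/4) / (4+s^2)^2)
      (Real.exp (r^2/4) * r^4 * (40 + 6*r^2 + r^4) / (2*(4+r^2)^3)) r := by
  have hu : HasDerivAt (fun s : ℝ => 4 + s^2) (2*r) r := by
    simpa using (hasDerivAt_pow 2 r).const_add 4
  have hden : HasDerivAt (fun s : ℝ => (4+s^2)^2) (2*(4+r^2)*(2*r)) r := by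
    have := hu.pow 2; simp at this; exact this
  have hq : HasDerivAt (fun s : ℝ => s^2/4) (2*r/4) r := by
    simpa using (hasDerivAt_pow 2 r).div_const 4
  have hexp : HasDerivAt (fun s : ℝ => Real.exp (s^2/4)) (Real.exp (r^2/4) * (2*r/4)) r := hq.exp
  have hnum : HasDerivAt (fun s : ℝ => s^5 * Real.exp (s^2/4))
      (5*r^4 * Real.exp (r^2/4) + r^5 * (Real.exp (r^2/4) * (2*r/4))) r := by
    have := (hasDerivAt_pow 5 r).mul hexp; simp at this; exact this
  have h4 : ((4:ℝ)+r^2) ≠ 0 := (upos r).ne'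
  have := hnum.div hden (pow_ne_zero 2 h4)
  refine this.congr_deriv ?_
  field_simp
  ring

private lemma hasDerivAt_WQ (c r : ℝ) :
    HasDerivAt (fun s : ℝ => s^5 * Real.exp (s^2/4) / (4+s^2)^2 * (c*s/(4+s^2)^2))
      (c * Real.exp (r^2/4) * r^5 * (48+r^4) / (2*(4+r^2)^5)) r := by
  have hu : HasDerivAt (fun s : ℝ => 4 + s^2) (2*r) r := by
    simpa using (hasDerivAt_pow 2 r).const_add 4
  have hden : HasDerivAt (fun s : ℝ => (4+s^2)^2) (2*(4+r^2)*(2*r)) r := by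
    have := hu.pow 2; simp at this; exact this
  have h4 : ((4:ℝ)+r^2) ≠ 0 := (upos r).ne'
  have hnum : HasDerivAt (fun s : ℝ => c*s) c r := by
    simpa using (hasDerivAt_id r).const_mul c
  have h2 : HasDerivAt (fun s : ℝ => c*s/(4+s^2)^2)
      ((c * (4+r^2)^2 - c*r*(2*(4+r^2)*(2*r)))/((4+r^2)^2)^2) r :=
    hnum.div hden (pow_ne_zero 2 h4)
  have := (hasDerivAt_W r).mul h2
  refine this.congr_deriv ?_
  field_simp
  ring

private lemma step_upper (A x θ : ℝ) (hA : 0 < A) (hx : 0 < x) (hθ : 0 < θ)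
    (hv : (4+x^2)*θ ≤ 17*A*(2 - 7/(4+x^2))) :
    x^5 * Real.exp (x^2/4) / (4+x^2)^2 * ((4+x^2)*θ) * (32/(4+x^2)^2 - θ)
      ≤ 17*A*(14 * Real.exp (x^2/4) * x^5 * (48+x^4) / (2*(4+x^2)^5)) := by
  have hu := upos x
  have h4 : ((4:ℝ)+x^2) ≠ 0 := hu.ne'
  rw [← sub_nonneg]
  have heq : 17*A*(14 * Real.exp (x^2/4) * x^5 * (48+x^4) / (2*(4+x^2)^5))
      - x^5 * Real.exp (x^2/4) / (4+x^2)^2 * ((4+x^2)*θ) * (32/(4+x^2)^2 - θ)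
      = x^5 * Real.exp (x^2/4) *
        (238*A*(48+x^4) - 64*(4+x^2)^2*θ + 2*(4+x^2)^4*θ^2) / (2*(4+x^2)^5) := by
    field_simp
    ring
  rw [heq]
  apply div_nonneg _ (by positivity)
  apply mul_nonneg (by positivity)
  have hv' : (4+x^2)^2*θ ≤ 17*A*(2*(4+x^2)-7) := by
    have h2 : 17*A*(2 - 7/(4+x^2))*(4+x^2) = 17*A*(2*(4+x^2)-7) := by field_simp
    nlinarith [mul_le_mul_of_nonneg_right hv hu.le]
  have hq : (0:ℝ) ≤ 7*x^4 - 64*x^2 + 304 := by nlinarith [sq_nonneg (7*x^2-32)]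
  nlinarith [mul_nonneg hA.le hq, sq_nonneg ((4+x^2)^2*θ)]

private lemma step_lower (A x θ : ℝ) (hA : 0 < A) (hx : 0 < x) (hθ : 0 < θ)
    (hv : (4+x^2)*θ ≤ 34*A) :
    0 ≤ x^5 * Real.exp (x^2/4) / (4+x^2)^2 * ((4+x^2)*θ) * (32/(4+x^2)^2 - θ)
        + (34*A)^2 * (3 * Real.exp (x^2/4) * x^5 * (48+x^4) / (2*(4+x^2)^5)) := by
  have hu := upos x
  have h4 : ((4:ℝ)+x^2) ≠ 0 := hu.ne'
  have heq : x^5 * Real.exp (x^2/4) / (4+x^2)^2 * ((4+x^2)*θ) * (32/(4+x^2)^2 - θ)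
        + (34*A)^2 * (3 * Real.exp (x^2/4) * x^5 * (48+x^4) / (2*(4+x^2)^5))
      = x^5 * Real.exp (x^2/4) *
        (64*(4+x^2)^2*θ - 2*(4+x^2)^4*θ^2 + 3*(34*A)^2*(48+x^4)) / (2*(4+x^2)^5) := by
    field_simp
    ring
  rw [heq]
  apply div_nonneg _ (by positivity)
  apply mul_nonneg (by positivity)
  have h1 : (4+x^2)^2*θ ≤ (4+x^2)*(34*A) := by nlinarith [mul_le_mul_of_nonneg_left hv hu.le]
  have h1' : (0:ℝ) ≤ (4+x^2)^2*θ := by positivity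
  have h2 : ((4+x^2)^2*θ)^2 ≤ ((4+x^2)*(34*A))^2 := by
    nlinarith [mul_self_le_mul_self h1' h1]
  have h48 : (0:ℝ) ≤ x^4 - 16*x^2 + 112 := by nlinarith [sq_nonneg (x^2-8)]
  nlinarith [mul_nonneg (sq_nonneg (34*A)) h48, h2, mul_nonneg (mul_nonneg (sq_nonneg (4+x^2)) hθ.le) (by norm_num : (0:ℝ) ≤ 64)]


set_option maxHeartbeats 1000000 in
private lemma core (A : ℝ) (hA : 0 < A) (hA' : A ≤ 1/250) (Θ : ℝ → ℝ)
    (hC2 : ContDiffOn ℝ 2 Θ (Set.Ici 0))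
    (hpos : ∀ r ≥ (0:ℝ), 0 < Θ r)
    (hODE : ∀ r > (0:ℝ), deriv (deriv Θ) r + (5 / r) * deriv Θ r + (r / 2) * deriv Θ r
          + Θ r + Θ r ^ 2 = 0)
    (h0 : Θ 0 = A) :
    ∀ r ≥ (0:ℝ), 2*A ≤ (4+r^2) * Θ r ∧ (4+r^2) * Θ r ≤ 34*A := by
  set W : ℝ → ℝ := fun s => s^5 * Real.exp (s^2/4) / (4+s^2)^2 with hWdef
  set Θ₁ : ℝ → ℝ := derivWithin Θ (Set.Ici 0) with hT1def
  set F : ℝ → ℝ := fun s => W s * (2*s*Θ s + (4+s^2) * Θ₁ s) with hFdef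
  have hΘc : ContinuousOn Θ (Ici 0) := hC2.continuousOn
  have hΘ₁c : ContinuousOn Θ₁ (Ici 0) :=
    hC2.continuousOn_derivWithin (uniqueDiffOn_Ici 0) (by norm_num)
  have hWc : Continuous W := by
    apply Continuous.div (by fun_prop) (by fun_prop)
    intro s; exact pow_ne_zero 2 (upos s).ne'
  have hWpos : ∀ s : ℝ, 0 < s → 0 < W s := by
    intro s hs; rw [hWdef]; positivity
  have hW0 : W 0 = 0 := by rw [hWdef]; norm_num
  have hFc : ContinuousOn F (Ici 0) := by
    apply hWc.continuousOn.mul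
    apply ContinuousOn.add
    · exact ((continuous_const.mul continuous_id).continuousOn).mul hΘc
    · exact ((continuous_const.add (continuous_pow 2)).continuousOn).mul hΘ₁c
  have hD1 : ∀ r ∈ Ioi (0:ℝ), HasDerivAt Θ (deriv Θ r) r := by
    intro r hr
    have h := (hC2.mono Ioi_subset_Ici_self).differentiableOn (by norm_num)
    exact (h.differentiableAt (isOpen_Ioi.mem_nhds hr)).hasDerivAt
  have hCd : ContDiffOn ℝ 1 (deriv Θ) (Ioi 0) :=
    (hC2.mono Ioi_subset_Ici_self).deriv_of_isOpen isOpen_Ioi (by norm_num)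
  have hD2 : ∀ r ∈ Ioi (0:ℝ), HasDerivAt (deriv Θ) (deriv (deriv Θ) r) r := by
    intro r hr
    exact ((hCd.differentiableOn (by norm_num)).differentiableAt
      (isOpen_Ioi.mem_nhds hr)).hasDerivAt
  have hΘ₁eq : ∀ r ∈ Ioi (0:ℝ), Θ₁ r = deriv Θ r := fun r hr =>
    derivWithin_of_mem_nhds (Ici_mem_nhds hr)
  -- the fundamental derivative identity for F
  have hFderiv : ∀ r ∈ Ioi (0:ℝ),
      HasDerivAt F (W r * ((4+r^2)*Θ r) * (32/(4+r^2)^2 - Θ r)) r := by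
    intro r hr
    have hrpos : (0:ℝ) < r := hr
    have hrne : r ≠ 0 := hrpos.ne'
    have h4 : ((4:ℝ)+r^2) ≠ 0 := (upos r).ne'
    have hb := hD1 r hr
    have hd2 := hD2 r hr
    have hode : deriv (deriv Θ) r
        = -((5/r) * deriv Θ r) - (r/2) * deriv Θ r - Θ r - Θ r^2 := by
      have := hODE r hrpos; linarith
    rw [hode] at hd2
    have h2s : HasDerivAt (fun s : ℝ => 2*s) 2 r := by
      simpa using (hasDerivAt_id r).const_mul 2
    have h1 : HasDerivAt (fun s : ℝ => 2*s*Θ s) (2*Θ r + 2*r*deriv Θ r) r := by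
      have := h2s.mul hb; exact this
    have hu : HasDerivAt (fun s : ℝ => 4 + s^2) (2*r) r := by
      simpa using (hasDerivAt_pow 2 r).const_add 4
    have h2 : HasDerivAt (fun s : ℝ => (4+s^2) * deriv Θ s)
        (2*r*deriv Θ r + (4+r^2)*(-((5/r) * deriv Θ r) - (r/2) * deriv Θ r - Θ r - Θ r^2)) r :=
      hu.mul hd2
    have hG : HasDerivAt (fun s : ℝ => (s^5 * Real.exp (s^2/4) / (4+s^2)^2)
          * (2*s*Θ s + (4+s^2) * deriv Θ s))
        (Real.exp (r^2/4) * r^4 * (40 + 6*r^2 + r^4) / (2*(4+r^2)^3)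
            * (2*r*Θ r + (4+r^2)*deriv Θ r)
          + (r^5 * Real.exp (r^2/4) / (4+r^2)^2)
            * ((2*Θ r + 2*r*deriv Θ r)
              + (2*r*deriv Θ r + (4+r^2)*(-((5/r) * deriv Θ r) - (r/2) * deriv Θ r
                  - Θ r - Θ r^2)))) r :=
      (hasDerivAt_W r).mul (h1.add h2)
    have hFG : F =ᶠ[nhds r] (fun s => (s^5 * Real.exp (s^2/4) / (4+s^2)^2)
        * (2*s*Θ s + (4+s^2) * deriv Θ s)) := by
      filter_upwards [isOpen_Ioi.mem_nhds hr] with s hs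
      rw [hFdef]
      simp only [hWdef]
      rw [hΘ₁eq s hs]
    have hmain := hG.congr_of_eventuallyEq hFG
    refine hmain.congr_deriv ?_
    rw [hWdef]
    simp only
    field_simp
    ring
  ----------------------------------------------------------------
  -- Step A : upper bound  (4+r²)Θ r < 17A(2 - 7/(4+r²))
  ----------------------------------------------------------------
  have hupper : ∀ r ≥ (0:ℝ), (4+r^2) * Θ r < 17*A*(2 - 7/(4+r^2)) := by
    by_contra hcon
    push_neg at hcon
    obtain ⟨r₁, hr₁, hler⟩ := hcon
    set h : ℝ → ℝ := fun s => 17*A*(2 - 7/(4+s^2)) - (4+s^2) * Θ s with hhdef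
    have hhc : ContinuousOn h (Ici 0) := by
      apply ContinuousOn.sub
      · apply Continuous.continuousOn
        apply continuous_const.mul
        apply continuous_const.sub
        exact continuous_const.div (continuous_const.add (continuous_pow 2))
          (fun s => (upos s).ne')
      · exact ((continuous_const.add (continuous_pow 2)).continuousOn).mul hΘc
    have hh0 : h 0 = A/4 := by
      rw [hhdef]; simp only [h0]; norm_num; ring
    set S := {s : ℝ | 0 ≤ s ∧ h s ≤ 0} with hSdef
    have hSne : S.Nonempty := ⟨r₁, hr₁, by rw [hhdef]; simp only; linarith⟩
    have hSclosed : IsClosed S := by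
      have hSeq : S = Ici 0 ∩ h ⁻¹' (Iic 0) := by
        ext s; simp [hSdef]
      rw [hSeq]
      exact hhc.preimage_isClosed_of_isClosed isClosed_Ici isClosed_Iic
    have hSbdd : BddBelow S := ⟨0, fun s hs => hs.1⟩
    set r₀ := sInf S with hr₀def
    have hr₀S : r₀ ∈ S := hSclosed.csInf_mem hSne hSbdd
    have hr₀0 : 0 ≤ r₀ := hr₀S.1
    have hr₀pos : 0 < r₀ := by
      rcases hr₀0.lt_or_eq with hlt | heq
      · exact hlt
      · exfalso; have := hr₀S.2; rw [← heq] at this; rw [hh0] at this; linarith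
    have hbefore : ∀ s, 0 ≤ s → s < r₀ → 0 < h s := by
      intro s hs0 hs
      by_contra hns
      push_neg at hns
      exact absurd (csInf_le hSbdd ⟨hs0, hns⟩) (not_le.mpr hs)
    -- Y := 17A (W ⬝ V') - F is monotone on [0, r₀]
    set Y : ℝ → ℝ := fun s => 17*A*(W s * (14*s/(4+s^2)^2)) - F s with hYdef
    have hYc : ContinuousOn Y (Icc 0 r₀) := by
      apply ContinuousOn.sub
      · apply Continuous.continuousOn
        apply continuous_const.mul
        apply hWc.mul
        exact (continuous_const.mul continuous_id).div
          (continuous_pow 2 |>.comp (continuous_const.add (continuous_pow 2)))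
          (fun s => pow_ne_zero 2 (upos s).ne')
      · exact hFc.mono (Icc_subset_Ici_self)
    have hYd : ∀ x ∈ Ioo (0:ℝ) r₀, HasDerivAt Y
        (17*A*(14 * Real.exp (x^2/4) * x^5 * (48+x^4) / (2*(4+x^2)^5))
          - W x * ((4+x^2)*Θ x) * (32/(4+x^2)^2 - Θ x)) x := by
      intro x hx
      have hWQ : HasDerivAt (fun s : ℝ => 17*A*(W s * (14*s/(4+s^2)^2)))
          (17*A*(14 * Real.exp (x^2/4) * x^5 * (48+x^4) / (2*(4+x^2)^5))) x := by
        simp only [hWdef]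
        exact (hasDerivAt_WQ 14 x).const_mul (17*A)
      exact hWQ.sub (hFderiv x hx.1)
    have hYd0 : ∀ x ∈ Ioo (0:ℝ) r₀,
        0 ≤ 17*A*(14 * Real.exp (x^2/4) * x^5 * (48+x^4) / (2*(4+x^2)^5))
          - W x * ((4+x^2)*Θ x) * (32/(4+x^2)^2 - Θ x) := by
      intro x hx
      have hθx := hpos x hx.1.le
      have hhx := hbefore x hx.1.le hx.2
      have hvle : (4+x^2)*Θ x ≤ 17*A*(2 - 7/(4+x^2)) := by
        rw [hhdef] at hhx; simp only at hhx; linarith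
      have := step_upper A x (Θ x) hA hx.1 hθx hvle
      rw [hWdef]
      simp only
      linarith
    have hYmono : MonotoneOn Y (Icc 0 r₀) := by
      apply monotoneOn_of_deriv_nonneg (convex_Icc 0 r₀) hYc
      · intro x hx
        rw [interior_Icc] at hx
        exact (hYd x hx).differentiableAt.differentiableWithinAt
      · intro x hx
        rw [interior_Icc] at hx
        rw [(hYd x hx).deriv]
        exact hYd0 x hx
    have hY0 : Y 0 = 0 := by
      rw [hYdef]; simp only [hFdef, hW0]; ring
    -- h is monotone on [0, r₀]
    have hhd : ∀ x ∈ Ioo (0:ℝ) r₀, HasDerivAt h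
        (17*A*(14*x/(4+x^2)^2) - (2*x*Θ x + (4+x^2)*deriv Θ x)) x := by
      intro x hx
      have h4 : ((4:ℝ)+x^2) ≠ 0 := (upos x).ne'
      have hu : HasDerivAt (fun s : ℝ => 4 + s^2) (2*x) x := by
        simpa using (hasDerivAt_pow 2 x).const_add 4
      have hq : HasDerivAt (fun s : ℝ => 17*A*(2 - 7/(4+s^2)))
          (17*A*(14*x/(4+x^2)^2)) x := by
        have hdiv : HasDerivAt (fun s : ℝ => 7/(4+s^2))
            ((0*(4+x^2) - 7*(2*x))/(4+x^2)^2) x := (hasDerivAt_const x 7).div hu h4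
        have h5 := ((hdiv.const_sub 2).const_mul (17*A))
        have heq : 17*A*(14*x/(4+x^2)^2) = 17*A* -((0*(4+x^2) - 7*(2*x))/(4+x^2)^2) := by
          field_simp
          ring
        rw [heq]
        exact h5
      have hvd : HasDerivAt (fun s : ℝ => (4+s^2)*Θ s)
          (2*x*Θ x + (4+x^2)*deriv Θ x) x := hu.mul (hD1 x hx.1)
      exact hq.sub hvd
    have hhd0 : ∀ x ∈ Ioo (0:ℝ) r₀,
        0 ≤ 17*A*(14*x/(4+x^2)^2) - (2*x*Θ x + (4+x^2)*deriv Θ x) := by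
      intro x hx
      have hWx := hWpos x hx.1
      have hYx : 0 ≤ Y x := by
        have hmem0 : (0:ℝ) ∈ Icc 0 r₀ := ⟨le_refl 0, hr₀0⟩
        have hmemx : x ∈ Icc 0 r₀ := ⟨hx.1.le, hx.2.le⟩
        have := hYmono hmem0 hmemx hx.1.le
        rwa [hY0] at this
      have hYx' : W x * (2*x*Θ x + (4+x^2)*deriv Θ x)
          ≤ W x * (17*A*(14*x/(4+x^2)^2)) := by
        rw [hYdef] at hYx
        simp only [hFdef] at hYx
        rw [hΘ₁eq x hx.1] at hYx
        ring_nf at hYx ⊢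
        linarith
      have := le_of_mul_le_mul_left hYx' hWx
      linarith
    have hhmono : MonotoneOn h (Icc 0 r₀) := by
      apply monotoneOn_of_deriv_nonneg (convex_Icc 0 r₀) (hhc.mono Icc_subset_Ici_self)
      · intro x hx
        rw [interior_Icc] at hx
        exact (hhd x hx).differentiableAt.differentiableWithinAt
      · intro x hx
        rw [interior_Icc] at hx
        rw [(hhd x hx).deriv]
        exact hhd0 x hx
    have hfinal := hhmono ⟨le_refl (0:ℝ), hr₀0⟩ ⟨hr₀0, le_refl r₀⟩ hr₀0
    rw [hh0] at hfinal
    have hc0 : A / 4 ≤ 0 := le_trans hfinal hr₀S.2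
    linarith
  ----------------------------------------------------------------
  -- upper bound v ≤ 34 A
  ----------------------------------------------------------------
  have hub : ∀ r ≥ (0:ℝ), (4+r^2)*Θ r ≤ 34*A := by
    intro r hr
    have h1 := hupper r hr
    have h7 : 0 < 7/(4+r^2) := by positivity
    nlinarith [mul_pos hA h7]
  ----------------------------------------------------------------
  -- Step B : lower bound for the derivative of v
  ----------------------------------------------------------------
  have hZineq : ∀ r ∈ Ioi (0:ℝ),
      -((34*A)^2*(3*r/(4+r^2)^2)) ≤ 2*r*Θ r + (4+r^2)*deriv Θ r := by
    intro r hr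
    have hrpos : (0:ℝ) < r := hr
    set Z : ℝ → ℝ := fun s => F s + (34*A)^2*(W s * (3*s/(4+s^2)^2)) with hZdef
    have hZc : ContinuousOn Z (Icc 0 r) := by
      apply ContinuousOn.add (hFc.mono Icc_subset_Ici_self)
      apply Continuous.continuousOn
      apply continuous_const.mul
      apply hWc.mul
      exact (continuous_const.mul continuous_id).div
        (continuous_pow 2 |>.comp (continuous_const.add (continuous_pow 2)))
        (fun s => pow_ne_zero 2 (upos s).ne')
    have hZd : ∀ x ∈ Ioo (0:ℝ) r, HasDerivAt Z
        (W x * ((4+x^2)*Θ x) * (32/(4+x^2)^2 - Θ x)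
          + (34*A)^2*(3 * Real.exp (x^2/4) * x^5 * (48+x^4) / (2*(4+x^2)^5))) x := by
      intro x hx
      apply (hFderiv x hx.1).add
      simp only [hWdef]
      exact (hasDerivAt_WQ 3 x).const_mul ((34*A)^2)
    have hZd0 : ∀ x ∈ Ioo (0:ℝ) r,
        0 ≤ W x * ((4+x^2)*Θ x) * (32/(4+x^2)^2 - Θ x)
          + (34*A)^2*(3 * Real.exp (x^2/4) * x^5 * (48+x^4) / (2*(4+x^2)^5)) := by
      intro x hx
      have hθx := hpos x hx.1.le
      have hvle := hub x hx.1.le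
      have := step_lower A x (Θ x) hA hx.1 hθx hvle
      rw [hWdef]
      simp only
      linarith
    have hZmono : MonotoneOn Z (Icc 0 r) := by
      apply monotoneOn_of_deriv_nonneg (convex_Icc 0 r) hZc
      · intro x hx
        rw [interior_Icc] at hx
        exact (hZd x hx).differentiableAt.differentiableWithinAt
      · intro x hx
        rw [interior_Icc] at hx
        rw [(hZd x hx).deriv]
        exact hZd0 x hx
    have hZ0 : Z 0 = 0 := by
      rw [hZdef]; simp only [hFdef, hW0]; ring
    have hZr : 0 ≤ Z r := by
      have := hZmono ⟨le_refl (0:ℝ), hrpos.le⟩ ⟨hrpos.le, le_refl r⟩ hrpos.le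
      rwa [hZ0] at this
    have hWr := hWpos r hrpos
    have hZr' : W r * (-((34*A)^2*(3*r/(4+r^2)^2)))
        ≤ W r * (2*r*Θ r + (4+r^2)*deriv Θ r) := by
      rw [hZdef] at hZr
      simp only [hFdef] at hZr
      rw [hΘ₁eq r hr] at hZr
      ring_nf at hZr ⊢
      linarith
    exact le_of_mul_le_mul_left hZr' hWr
  ----------------------------------------------------------------
  -- conclusion
  ----------------------------------------------------------------
  intro r hr
  refine ⟨?_, hub r hr⟩
  rcases hr.lt_or_eq with hrpos | hreq
  · -- r > 0 : use monotonicity of Φ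
    set Φ : ℝ → ℝ := fun s => (4+s^2)*Θ s + (34*A)^2*((3/2)*(1/4 - 1/(4+s^2))) with hΦdef
    have hΦc : ContinuousOn Φ (Icc 0 r) := by
      apply ContinuousOn.add
      · exact (((continuous_const.add (continuous_pow 2)).continuousOn).mul
          (hΘc.mono Icc_subset_Ici_self))
      · apply Continuous.continuousOn
        apply continuous_const.mul
        apply continuous_const.mul
        apply continuous_const.sub
        exact continuous_const.div (continuous_const.add (continuous_pow 2))
          (fun s => (upos s).ne')
    have hΦd : ∀ x ∈ Ioo (0:ℝ) r, HasDerivAt Φ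
        ((2*x*Θ x + (4+x^2)*deriv Θ x) + (34*A)^2*(3*x/(4+x^2)^2)) x := by
      intro x hx
      have h4 : ((4:ℝ)+x^2) ≠ 0 := (upos x).ne'
      have hu : HasDerivAt (fun s : ℝ => 4 + s^2) (2*x) x := by
        simpa using (hasDerivAt_pow 2 x).const_add 4
      have hvd : HasDerivAt (fun s : ℝ => (4+s^2)*Θ s)
          (2*x*Θ x + (4+x^2)*deriv Θ x) x := hu.mul (hD1 x hx.1)
      have hdiv : HasDerivAt (fun s : ℝ => 1/(4+s^2))
          ((0*(4+x^2) - 1*(2*x))/(4+x^2)^2) x := (hasDerivAt_const x 1).div hu h4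
      have h5 := ((hdiv.const_sub (1/4)).const_mul (3/2)).const_mul ((34*A)^2)
      have heq : (34*A)^2*(3*x/(4+x^2)^2)
          = (34*A)^2*(3/2* -((0*(4+x^2) - 1*(2*x))/(4+x^2)^2)) := by
        field_simp
        ring
      rw [heq]
      exact hvd.add h5
    have hΦd0 : ∀ x ∈ Ioo (0:ℝ) r,
        0 ≤ (2*x*Θ x + (4+x^2)*deriv Θ x) + (34*A)^2*(3*x/(4+x^2)^2) := by
      intro x hx
      have := hZineq x hx.1
      linarith
    have hΦmono : MonotoneOn Φ (Icc 0 r) := by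
      apply monotoneOn_of_deriv_nonneg (convex_Icc 0 r) hΦc
      · intro x hx
        rw [interior_Icc] at hx
        exact (hΦd x hx).differentiableAt.differentiableWithinAt
      · intro x hx
        rw [interior_Icc] at hx
        rw [(hΦd x hx).deriv]
        exact hΦd0 x hx
    have hΦle := hΦmono ⟨le_refl (0:ℝ), hrpos.le⟩ ⟨hrpos.le, le_refl r⟩ hrpos.le
    have hΦ0 : Φ 0 = 4*A := by
      rw [hΦdef]; simp only [h0]; norm_num
    rw [hΦ0] at hΦle
    rw [hΦdef] at hΦle
    simp only at hΦle
    have ht1 : (3:ℝ)/2*(1/4 - 1/(4+r^2)) ≤ 3/8 := by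
      have hq : (0:ℝ) < 1/(4+r^2) := by positivity
      linarith
    have hsq : (0:ℝ) ≤ (34*A)^2 := sq_nonneg _
    have hAA : A*A ≤ A*(1/250) := mul_le_mul_of_nonneg_left hA' hA.le
    have h2 : (34*A)^2*((3:ℝ)/2*(1/4 - 1/(4+r^2))) ≤ (34*A)^2*(3/8) :=
      mul_le_mul_of_nonneg_left ht1 hsq
    have h3 : (34*A)^2*((3:ℝ)/8) = (867/2)*(A*A) := by ring
    have h4 : ((867:ℝ)/2)*(A*A) ≤ (867/2)*(A*(1/250)) := by
      have := mul_le_mul_of_nonneg_left hAA (by norm_num : (0:ℝ) ≤ 867/2)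
      linarith
    linarith
  · -- r = 0
    rw [← hreq]
    rw [show ((4:ℝ)+0^2) = 4 by norm_num, h0]
    linarith


/-- `ℝ⁶` as a Euclidean space. -/
abbrev E6 : Type := EuclideanSpace ℝ (Fin 6)

set_option maxHeartbeats 1000000

/-- two-sided bounds `Θ(r) ∼ A (1+r)⁻²` for positive solutions of the
six-dimensional self-similar profile ODE with small initial value `A`, and consequently
two-sided bounds for the self-similar solution `θ_A(x,t) = (t+1)⁻¹ Θ(|x|/√(t+1))`. -/
theorem selfSimilar_profile_two_sided :
    ∃ A₀ > (0:ℝ), ∃ C ≥ (1:ℝ), ∃ C' ≥ (1:ℝ), ∀ A : ℝ, 0 < A → A ≤ A₀ →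
      ∀ Θ : ℝ → ℝ,
        ContDiffOn ℝ 2 Θ (Set.Ici 0) →
        (∀ r ≥ (0:ℝ), 0 < Θ r) →
        (∀ r > (0:ℝ), deriv (deriv Θ) r + (5 / r) * deriv Θ r + (r / 2) * deriv Θ r
          + Θ r + Θ r ^ 2 = 0) →
        Θ 0 = A → deriv Θ 0 = 0 →
        ((∀ r ≥ (0:ℝ), C⁻¹ * A * ((1 + r) ^ 2)⁻¹ ≤ Θ r ∧ Θ r ≤ C * A * ((1 + r) ^ 2)⁻¹) ∧
         ∀ (x : E6) (t : ℝ), 1 < t →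
           C'⁻¹ * A * ((if ‖x‖ ≤ Real.sqrt t then t⁻¹ else 0)
              + (if Real.sqrt t < ‖x‖ then (‖x‖ ^ 2)⁻¹ else 0))
             ≤ (t + 1)⁻¹ * Θ (‖x‖ / Real.sqrt (t + 1)) ∧
           (t + 1)⁻¹ * Θ (‖x‖ / Real.sqrt (t + 1))
             ≤ C' * A * ((if ‖x‖ ≤ Real.sqrt t then t⁻¹ else 0)
              + (if Real.sqrt t < ‖x‖ then (‖x‖ ^ 2)⁻¹ else 0))) := by
  refine ⟨1/250, by norm_num, 68, by norm_num, 544, by norm_num, ?_⟩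
  intro A hA hA' Θ hC2 hpos hODE h0 _
  have hcore := core A hA hA' Θ hC2 hpos hODE h0
  have part1 : ∀ r ≥ (0:ℝ), (68:ℝ)⁻¹ * A * ((1 + r) ^ 2)⁻¹ ≤ Θ r
      ∧ Θ r ≤ 68 * A * ((1 + r) ^ 2)⁻¹ := by
    intro r hr
    obtain ⟨hl, hu⟩ := hcore r hr
    have hu4 := upos r
    have h1r : (0:ℝ) < (1+r)^2 := by positivity
    constructor
    · have hΘ : 2*A/(4+r^2) ≤ Θ r := by
        rw [div_le_iff₀ hu4]
        linarith
      refine le_trans ?_ hΘ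
      rw [show (68:ℝ)⁻¹ * A * ((1 + r) ^ 2)⁻¹ = A/(68*(1+r)^2) by simp only [div_eq_mul_inv, mul_inv]; try ring]
      rw [div_le_div_iff₀ (by positivity) hu4]
      nlinarith [mul_nonneg hA.le (sq_nonneg r), mul_nonneg hA.le hr]
    · have hΘ : Θ r ≤ 34*A/(4+r^2) := by
        rw [le_div_iff₀ hu4]
        linarith
      refine le_trans hΘ ?_
      rw [show (68:ℝ) * A * ((1 + r) ^ 2)⁻¹ = 68*A/(1+r)^2 by ring]
      rw [div_le_div_iff₀ hu4 (by positivity)]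
      nlinarith [mul_nonneg hA.le (sq_nonneg (r-1)), mul_nonneg hA.le hr,
        mul_nonneg hA.le (sq_nonneg r)]
  refine ⟨part1, ?_⟩
  intro x t ht
  have hxnn : (0:ℝ) ≤ ‖x‖ := norm_nonneg x
  have ht0 : (0:ℝ) < t := lt_trans one_pos ht
  have ht1 : (0:ℝ) < t + 1 := by linarith
  have hst : (1:ℝ) ≤ Real.sqrt t := by
    rw [show (1:ℝ) = Real.sqrt 1 from (Real.sqrt_one).symm]
    exact Real.sqrt_le_sqrt ht.le
  have hst1 : (0:ℝ) < Real.sqrt (t+1) := Real.sqrt_pos.mpr ht1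
  have hsq1 : Real.sqrt (t+1)^2 = t+1 := Real.sq_sqrt ht1.le
  set ρ := ‖x‖ / Real.sqrt (t+1) with hρdef
  have hρ0 : 0 ≤ ρ := div_nonneg hxnn hst1.le
  obtain ⟨hL, hU⟩ := part1 ρ hρ0
  have hΘρpos := hpos ρ hρ0
  by_cases hcase : ‖x‖ ≤ Real.sqrt t
  · rw [if_pos hcase, if_neg (not_lt.mpr hcase)]
    have hρ1 : ρ ≤ 1 := by
      rw [hρdef, div_le_one hst1]
      calc ‖x‖ ≤ Real.sqrt t := hcase
        _ ≤ Real.sqrt (t+1) := Real.sqrt_le_sqrt (by linarith)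
    constructor
    · -- lower bound
      have h14 : (1+ρ)^2 ≤ 4 := by nlinarith
      have hΘ1 : A/272 ≤ Θ ρ := by
        refine le_trans ?_ hL
        rw [show (68:ℝ)⁻¹ * A * ((1 + ρ) ^ 2)⁻¹ = A/(68*(1+ρ)^2) by simp only [div_eq_mul_inv, mul_inv]; try ring]
        rw [div_le_div_iff₀ (by norm_num) (by positivity)]
        nlinarith [mul_nonneg hA.le (sq_nonneg (1+ρ))]
      rw [show (544:ℝ)⁻¹ * A * (t⁻¹ + 0) = A/(544*t) by field_simp; ring]
      have step : A/(544*t) ≤ (t+1)⁻¹ * (A/272) := by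
        rw [show ((t:ℝ)+1)⁻¹ * (A/272) = A/(272*(t+1)) by simp only [div_eq_mul_inv, mul_inv]; try ring]
        rw [div_le_div_iff₀ (by positivity) (by positivity)]
        nlinarith [mul_nonneg hA.le ht0.le, mul_pos hA ht0]
      refine le_trans step ?_
      have := mul_le_mul_of_nonneg_left hΘ1 (by positivity : (0:ℝ) ≤ (t+1)⁻¹)
      linarith
    · -- upper bound
      have h1ρ : (1:ℝ) ≤ (1+ρ)^2 := by nlinarith
      have hΘ2 : Θ ρ ≤ 68*A := by
        refine le_trans hU ?_
        rw [show (68:ℝ) * A * ((1 + ρ) ^ 2)⁻¹ = 68*A/(1+ρ)^2 by ring]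
        rw [div_le_iff₀ (by positivity)]
        nlinarith [mul_nonneg hA.le (sq_nonneg (1+ρ))]
      rw [show (544:ℝ) * A * (t⁻¹ + 0) = 544*A/t by field_simp; ring]
      have step : (t+1)⁻¹ * Θ ρ ≤ (t+1)⁻¹ * (68*A) :=
        mul_le_mul_of_nonneg_left hΘ2 (by positivity)
      refine le_trans step ?_
      rw [show ((t:ℝ)+1)⁻¹ * (68*A) = 68*A/(t+1) by simp only [div_eq_mul_inv, mul_inv]; try ring]
      rw [div_le_div_iff₀ (by positivity) (by positivity)]
      nlinarith [mul_nonneg hA.le ht0.le, mul_pos hA ht0]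
  · rw [if_neg hcase, if_pos (not_le.mp hcase)]
    have hxt : Real.sqrt t < ‖x‖ := not_le.mp hcase
    have hx1 : (1:ℝ) ≤ ‖x‖ := le_trans hst hxt.le
    have hx0 : (0:ℝ) < ‖x‖ := by linarith
    have htx : t < ‖x‖^2 := by
      nlinarith [Real.sq_sqrt ht0.le, Real.sqrt_nonneg t]
    have hkey : (1+ρ) * Real.sqrt (t+1) = Real.sqrt (t+1) + ‖x‖ := by
      rw [hρdef]
      field_simp
    have hkey2 : (1+ρ)^2 * (t+1) = (Real.sqrt (t+1) + ‖x‖)^2 := by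
      calc (1+ρ)^2 * (t+1) = ((1+ρ) * Real.sqrt (t+1))^2 := by rw [mul_pow, hsq1]
        _ = (Real.sqrt (t+1) + ‖x‖)^2 := by rw [hkey]
    have hlow : ‖x‖^2 ≤ (Real.sqrt (t+1) + ‖x‖)^2 := by
      nlinarith [mul_nonneg (Real.sqrt_nonneg (t+1)) hxnn, sq_nonneg (Real.sqrt (t+1))]
    have hhigh : (Real.sqrt (t+1) + ‖x‖)^2 ≤ 6*‖x‖^2 := by
      have h2x : t + 1 ≤ 2*‖x‖^2 := by nlinarith
      nlinarith [hsq1, sq_nonneg (Real.sqrt (t+1) - ‖x‖), Real.sqrt_nonneg (t+1)]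
    have hρpos : (0:ℝ) < (1+ρ)^2 := by positivity
    constructor
    · rw [show (544:ℝ)⁻¹ * A * (0 + (‖x‖^2)⁻¹) = A/(544*‖x‖^2) by field_simp; ring]
      have hΘ1 : A/(68*(1+ρ)^2) ≤ Θ ρ := by
        refine le_trans (le_of_eq ?_) hL
        simp only [div_eq_mul_inv, mul_inv]; try ring
      have step : A/(544*‖x‖^2) ≤ (t+1)⁻¹ * (A/(68*(1+ρ)^2)) := by
        rw [show ((t:ℝ)+1)⁻¹ * (A/(68*(1+ρ)^2)) = A/(68*((1+ρ)^2*(t+1))) by simp only [div_eq_mul_inv, mul_inv]; try ring]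
        rw [hkey2]
        rw [div_le_div_iff₀ (by positivity) (by positivity)]
        nlinarith [mul_le_mul_of_nonneg_left hhigh hA.le]
      refine le_trans step ?_
      have := mul_le_mul_of_nonneg_left hΘ1 (by positivity : (0:ℝ) ≤ (t+1)⁻¹)
      linarith
    · rw [show (544:ℝ) * A * (0 + (‖x‖^2)⁻¹) = 544*A/‖x‖^2 by field_simp; ring]
      have hΘ2 : Θ ρ ≤ 68*A/(1+ρ)^2 := by
        refine le_trans hU (le_of_eq ?_)
        simp only [div_eq_mul_inv, mul_inv]; try ring
      have step : (t+1)⁻¹ * Θ ρ ≤ (t+1)⁻¹ * (68*A/(1+ρ)^2) :=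
        mul_le_mul_of_nonneg_left hΘ2 (by positivity)
      refine le_trans step ?_
      rw [show ((t:ℝ)+1)⁻¹ * (68*A/(1+ρ)^2) = 68*A/((1+ρ)^2*(t+1)) by simp only [div_eq_mul_inv, mul_inv]; try ring]
      rw [hkey2]
      rw [div_le_div_iff₀ (by positivity) (by positivity)]
      nlinarith [mul_le_mul_of_nonneg_left hlow hA.le]
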